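/- Let p, q ≥ 1 and let (a, b) ∈ ℕ^p × ℕ^q with order statistics (a_{(0)},...,a_{(p-1)}) and (b_{(0)},...,b_{(q-1)}). Then (a,b) is a (p,q)-parking function if and only if: (i) #{j : a_j < i+1} ≥ b_{(i)} for all i = 0,...,q-1, and (ii) #{j : b_j < i+1} ≥ a_{(i)} for all i = 0,...,p-1. -/

import Mathlib

/-- `#{j : a j ≤ t}`. -/
def countLe {n : ℕ} (a : Fin n → ℕ) (t : ℕ) : ℕ :=
  (Finset.univ.filter fun j => a j ≤ t).card

/-- `#{j : a j < t}`. -/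
def countLt {n : ℕ} (a : Fin n → ℕ) (t : ℕ) : ℕ :=
  (Finset.univ.filter fun j => a j < t).card

/-- The `i`-th order statistic (`0`-indexed) of `a`. -/
noncomputable def orderStat {n : ℕ} (a : Fin n → ℕ) (i : Fin n) : ℕ :=
  sInf {t : ℕ | (i : ℕ) + 1 ≤ countLe a t}

/-- The lattice points visited by a monotone lattice path starting at `st`,
where `true` is a north step and `false` is an east step. -/
def stepPoints : ℕ × ℕ → List Bool → List (ℕ × ℕ)
  | st, [] => [st]
  | st, step :: rest =>
      st :: stepPoints (if step then (st.1, st.2 + 1) else (st.1 + 1, st.2)) rest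

/-- The `x`-coordinates of the north steps of a path starting at `x`-coordinate `x`. -/
def northXs : ℕ → List Bool → List ℕ
  | _, [] => []
  | x, true :: rest => x :: northXs x rest
  | x, false :: rest => northXs (x + 1) rest

/-- The `y`-coordinates of the east steps of a path starting at `y`-coordinate `y`. -/
def eastYs : ℕ → List Bool → List ℕ
  | _, [] => []
  | y, true :: rest => eastYs (y + 1) rest
  | y, false :: rest => y :: eastYs y rest

/-- `s` is a monotone lattice path from `(0,0)` to `(p,q)`. -/
def IsPathL (p q : ℕ) (s : List Bool) : Prop :=
  s.count false = p ∧ s.count true = q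

/-- `s` lies weakly above `s'` (both paths from `(0,0)` to `(p,q)`): every visited point
of `s'` has a visited point of `s` weakly above it in the same column. -/
def WeaklyAbove (s s' : List Bool) : Prop :=
  ∀ pt ∈ stepPoints (0, 0) s', ∃ pt' ∈ stepPoints (0, 0) s, pt'.1 = pt.1 ∧ pt.2 ≤ pt'.2

/-- `(a, b)` is a `(p,q)`-parking function: the path `L_b`, whose north steps have
`x`-coordinates given by the order statistics of `b`, lies weakly above the path
`L_a^⊥`, whose east steps have `y`-coordinates given by the order statistics of `a`. -/
def IsPQParkingFunction {p q : ℕ} (a : Fin p → ℕ) (b : Fin q → ℕ) : Prop :=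
  ∃ sa sb : List Bool, IsPathL p q sa ∧ IsPathL p q sb ∧
    eastYs 0 sa = List.ofFn (fun i : Fin p => orderStat a i) ∧
    northXs 0 sb = List.ofFn (fun j : Fin q => orderStat b j) ∧
    WeaklyAbove sb sa

namespace PFAux


variable {n : ℕ}

lemma countLe_mono (a : Fin n → ℕ) : Monotone (countLe a) := fun s t hst =>
  Finset.card_le_card (Finset.monotone_filter_right _ (fun j _ h => le_trans h hst))

lemma countLe_le (a : Fin n → ℕ) (t : ℕ) : countLe a t ≤ n := by
  simpa [countLe] using (Finset.card_filter_le Finset.univ (fun j => a j ≤ t))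

lemma countLt_le (a : Fin n → ℕ) (t : ℕ) : countLt a t ≤ n := by
  simpa [countLt] using (Finset.card_filter_le Finset.univ (fun j => a j < t))

lemma setNonempty (a : Fin n → ℕ) (i : Fin n) :
    {t : ℕ | (i : ℕ) + 1 ≤ countLe a t}.Nonempty := by
  refine ⟨Finset.univ.sup a, ?_⟩
  have : (Finset.univ.filter fun j => a j ≤ Finset.univ.sup a) = Finset.univ := by
    apply Finset.filter_true_of_mem
    intro j _
    exact Finset.le_sup (Finset.mem_univ j)
  simp only [Set.mem_setOf_eq, countLe, this, Finset.card_univ, Fintype.card_fin]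
  omega

lemma orderStat_mem (a : Fin n → ℕ) (i : Fin n) :
    (i : ℕ) + 1 ≤ countLe a (orderStat a i) :=
  Nat.sInf_mem (setNonempty a i)

lemma orderStat_le_iff (a : Fin n → ℕ) (i : Fin n) (t : ℕ) :
    orderStat a i ≤ t ↔ (i : ℕ) + 1 ≤ countLe a t :=
  ⟨fun h => le_trans (orderStat_mem a i) (countLe_mono a h), fun h => Nat.sInf_le h⟩

lemma orderStat_mono (a : Fin n → ℕ) {i j : Fin n} (hij : i ≤ j) :
    orderStat a i ≤ orderStat a j := by
  rw [orderStat_le_iff]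
  exact le_trans (by exact_mod_cast Nat.add_le_add_right hij 1) (orderStat_mem a j)

lemma countLt_succ (a : Fin n → ℕ) (t : ℕ) : countLt a (t + 1) = countLe a t := by
  unfold countLt countLe
  congr 1
  ext j
  simp [Nat.lt_succ_iff]

lemma card_filter_fin_lt {c : ℕ} (hc : c ≤ n) :
    (Finset.univ.filter fun i : Fin n => (i : ℕ) < c).card = c := by
  rcases lt_or_eq_of_le hc with h | h
  · have : (Finset.univ.filter fun i : Fin n => (i : ℕ) < c) = Finset.Iio (⟨c, h⟩ : Fin n) := by
      ext i
      simp [Fin.lt_def]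
    rw [this, Fin.card_Iio]
  · subst h
    rw [Finset.filter_true_of_mem (fun i _ => i.isLt)]
    simp

lemma countLe_orderStat (a : Fin n → ℕ) (t : ℕ) :
    countLe (orderStat a) t = countLe a t := by
  have h1 : (Finset.univ.filter fun i : Fin n => orderStat a i ≤ t) =
      (Finset.univ.filter fun i : Fin n => (i : ℕ) < countLe a t) := by
    ext i
    simp only [Finset.mem_filter, Finset.mem_univ, true_and]
    rw [orderStat_le_iff]
    omega
  show (Finset.univ.filter fun i : Fin n => orderStat a i ≤ t).card = _
  rw [h1, card_filter_fin_lt (countLe_le a t)]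

lemma countLt_orderStat (a : Fin n → ℕ) (t : ℕ) :
    countLt (orderStat a) t = countLt a t := by
  cases t with
  | zero => unfold countLt; simp
  | succ s => rw [countLt_succ, countLt_succ, countLe_orderStat]

lemma countP_ofFn_le (f : Fin n → ℕ) (t : ℕ) :
    (List.ofFn f).countP (fun e => e ≤ t) = countLe f t := by
  have h := Fin.univ_val_map f
  have h2 : ((List.ofFn f : List ℕ) : Multiset ℕ).countP (fun e => e ≤ t)
      = (List.ofFn f).countP (fun e => e ≤ t) := Multiset.coe_countP _ _
  rw [← h2, ← h, Multiset.countP_map]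
  unfold countLe
  rw [Finset.card_filter]
  simp [Multiset.countP_eq_card_filter, Finset.filter]

lemma countP_ofFn_lt (f : Fin n → ℕ) (t : ℕ) :
    (List.ofFn f).countP (fun e => e < t) = countLt f t := by
  have h := Fin.univ_val_map f
  have h2 : ((List.ofFn f : List ℕ) : Multiset ℕ).countP (fun e => e < t)
      = (List.ofFn f).countP (fun e => e < t) := Multiset.coe_countP _ _
  rw [← h2, ← h, Multiset.countP_map]
  unfold countLt
  rw [Finset.card_filter]
  simp [Multiset.countP_eq_card_filter, Finset.filter]



lemma stepPoints_lb : ∀ (s : List Bool) (x y : ℕ) (pt : ℕ × ℕ),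
    pt ∈ stepPoints (x, y) s → x ≤ pt.1 ∧ y ≤ pt.2 := by
  intro s
  induction s with
  | nil => intro x y pt h; simp [stepPoints] at h; simp [h]
  | cons head tail ih =>
    intro x y pt h
    simp only [stepPoints, List.mem_cons] at h
    rcases h with h | h
    · simp [h]
    · cases head
      · have := ih (x + 1) y pt (by simpa using h)
        omega
      · have := ih x (y + 1) pt (by simpa using h)
        omega

lemma stepPoints_ub : ∀ (s : List Bool) (x y : ℕ) (pt : ℕ × ℕ),
    pt ∈ stepPoints (x, y) s →
      pt.1 ≤ x + s.count false ∧ pt.2 ≤ y + s.count true := by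
  intro s
  induction s with
  | nil => intro x y pt h; simp [stepPoints] at h; simp [h]
  | cons head tail ih =>
    intro x y pt h
    simp only [stepPoints, List.mem_cons] at h
    rcases h with h | h
    · subst h; constructor <;> simp [List.count_cons] <;> omega
    · cases head
      · have := ih (x + 1) y pt (by simpa using h)
        constructor <;> simp [List.count_cons] <;> omega
      · have := ih x (y + 1) pt (by simpa using h)
        constructor <;> simp [List.count_cons] <;> omega

lemma northXs_lb : ∀ (s : List Bool) (x e : ℕ), e ∈ northXs x s → x ≤ e := by
  intro s
  induction s with
  | nil => intro x e h; simp [northXs] at h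
  | cons head tail ih =>
    intro x e h
    cases head
    · have := ih (x + 1) e (by simpa [northXs] using h)
      omega
    · simp only [northXs, List.mem_cons] at h
      rcases h with h | h
      · omega
      · exact ih x e h

lemma eastYs_lb : ∀ (s : List Bool) (y e : ℕ), e ∈ eastYs y s → y ≤ e := by
  intro s
  induction s with
  | nil => intro y e h; simp [eastYs] at h
  | cons head tail ih =>
    intro y e h
    cases head
    · simp only [eastYs, List.mem_cons] at h
      rcases h with h | h
      · omega
      · exact ih y e h
    · have := ih (y + 1) e (by simpa [eastYs] using h)
      omega

lemma northXs_ub : ∀ (s : List Bool) (x e : ℕ), e ∈ northXs x s → e ≤ x + s.count false := by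
  intro s
  induction s with
  | nil => intro x e h; simp [northXs] at h
  | cons head tail ih =>
    intro x e h
    cases head
    · have := ih (x + 1) e (by simpa [northXs] using h)
      simp [List.count_cons]; omega
    · simp only [northXs, List.mem_cons] at h
      simp [List.count_cons]
      rcases h with h | h
      · omega
      · have := ih x e h; omega

lemma length_northXs : ∀ (s : List Bool) (x : ℕ), (northXs x s).length = s.count true := by
  intro s
  induction s with
  | nil => intro x; simp [northXs]
  | cons head tail ih =>
    intro x
    cases head <;> simp [northXs, List.count_cons, ih]

lemma length_eastYs : ∀ (s : List Bool) (y : ℕ), (eastYs y s).length = s.count false := by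
  intro s
  induction s with
  | nil => intro y; simp [eastYs]
  | cons head tail ih =>
    intro y
    cases head <;> simp [eastYs, List.count_cons, ih]

/-- F1: the east step at index `i` starts at `(x + i, e_i)`. -/
lemma eastYs_get_mem : ∀ (s : List Bool) (x y i : ℕ) (h : i < (eastYs y s).length),
    (x + i, (eastYs y s).get ⟨i, h⟩) ∈ stepPoints (x, y) s := by
  intro s
  induction s with
  | nil => intro x y i h; simp [eastYs] at h
  | cons head tail ih =>
    intro x y i h
    cases head
    · simp only [eastYs] at h ⊢
      cases i with
      | zero => simp [stepPoints]
      | succ j =>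
        have := ih (x + 1) y j (by simpa using h)
        simp only [stepPoints, List.mem_cons]
        right
        simp only [if_neg Bool.false_ne_true]
        convert this using 2
        omega
        rfl
    · simp only [eastYs] at h ⊢
      have := ih x (y + 1) i h
      simp only [stepPoints, List.mem_cons]
      right
      simpa using this

/-- F2: at any visited point, the height is at most the number of north steps
with x-coordinate ≤ the current column. -/
lemma stepPoints_y_le : ∀ (s : List Bool) (x y : ℕ) (pt : ℕ × ℕ),
    pt ∈ stepPoints (x, y) s →
      pt.2 ≤ y + (northXs x s).countP (fun e => e ≤ pt.1) := by
  intro s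
  induction s with
  | nil => intro x y pt h; simp [stepPoints] at h; simp [h]
  | cons head tail ih =>
    intro x y pt h
    simp only [stepPoints, List.mem_cons] at h
    rcases h with h | h
    · subst h; simp
    · cases head
      · have := ih (x + 1) y pt (by simpa using h)
        simpa [northXs] using this
      · have hmem : pt ∈ stepPoints (x, y + 1) tail := by simpa using h
        have h1 := ih x (y + 1) pt hmem
        have hx : x ≤ pt.1 := (stepPoints_lb tail x (y + 1) pt hmem).1
        simp only [northXs, List.countP_cons]
        simp only [decide_eq_true_eq] -- maybe
        rw [if_pos hx]  -- guess
        omega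

/-- F3: at any visited point, all east steps strictly below have been taken. -/
lemma stepPoints_x_ge : ∀ (s : List Bool) (x y : ℕ) (pt : ℕ × ℕ),
    pt ∈ stepPoints (x, y) s →
      x + (eastYs y s).countP (fun e => e < pt.2) ≤ pt.1 := by
  intro s
  induction s with
  | nil => intro x y pt h; simp [stepPoints] at h; simp [h, eastYs]
  | cons head tail ih =>
    intro x y pt h
    simp only [stepPoints, List.mem_cons] at h
    rcases h with h | h
    · subst h
      have hz : (eastYs y (head :: tail)).countP (fun e => e < y) = 0 := by
        rw [List.countP_eq_zero]
        intro e he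
        have := eastYs_lb (head :: tail) y e he
        simp only [decide_eq_true_eq]
        omega
      simp [hz]
    · cases head
      · have hmem : pt ∈ stepPoints (x + 1, y) tail := by simpa using h
        have h1 := ih (x + 1) y pt hmem
        simp only [eastYs, List.countP_cons]
        have hle : (if decide (y < pt.2) = true then 1 else 0) ≤ 1 := by
          split <;> simp
        omega
      · have hmem : pt ∈ stepPoints (x, y + 1) tail := by simpa using h
        have h1 := ih x (y + 1) pt hmem
        simpa [eastYs] using h1

/-- G: the path visits the point in column `u` at height `y + #{north steps with x ≤ u}`. -/
lemma mem_stepPoints_top : ∀ (s : List Bool) (x y u : ℕ), x ≤ u → u ≤ x + s.count false →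
    (u, y + (northXs x s).countP (fun e => e ≤ u)) ∈ stepPoints (x, y) s := by
  intro s
  induction s with
  | nil =>
    intro x y u h1 h2
    simp at h2
    have : u = x := by omega
    simp [this, stepPoints, northXs]
  | cons head tail ih =>
    intro x y u h1 h2
    cases head
    · simp only [List.count_cons] at h2
      norm_num at h2
      simp only [northXs, stepPoints, List.mem_cons]
      rcases Nat.eq_or_lt_of_le h1 with h | h
      · subst h
        left
        have hz : (northXs (x + 1) tail).countP (fun e => e ≤ x) = 0 := by
          rw [List.countP_eq_zero]
          intro e he
          have := northXs_lb tail (x + 1) e he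
          simp only [decide_eq_true_eq]
          omega
        simp [hz]
      · right
        simp only [if_neg Bool.false_ne_true]
        exact ih (x + 1) y u h (by omega)
    · simp only [List.count_cons] at h2
      norm_num at h2
      simp only [northXs, stepPoints, List.mem_cons]
      right
      have hih := ih x (y + 1) u h1 (by omega)
      have hcp : (x :: northXs x tail).countP (fun e => e ≤ u) =
          (northXs x tail).countP (fun e => e ≤ u) + 1 := by
        rw [List.countP_cons]
        have hd : decide (x ≤ u) = true := decide_eq_true h1
        simp [hd]
      rw [hcp]
      convert hih using 2
      · simp
      omega



/-- Build a path with prescribed east-step `y`-coordinates, going up to height `q`. -/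
def buildE (q : ℕ) : ℕ → List ℕ → List Bool
  | y, [] => List.replicate (q - y) true
  | y, e :: rest => List.replicate (e - y) true ++ false :: buildE q e rest

/-- Build a path with prescribed north-step `x`-coordinates, going right to `p`. -/
def buildN (p : ℕ) : ℕ → List ℕ → List Bool
  | x, [] => List.replicate (p - x) false
  | x, e :: rest => List.replicate (e - x) false ++ true :: buildN p e rest

lemma eastYs_replicate_true (s : List Bool) : ∀ (k y : ℕ),
    eastYs y (List.replicate k true ++ s) = eastYs (y + k) s := by
  intro k
  induction k with
  | zero => intro y; simp [eastYs]
  | succ m ih =>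
    intro y
    rw [List.replicate_succ, List.cons_append]
    show eastYs (y + 1) (List.replicate m true ++ s) = _
    rw [ih]
    congr 1
    omega

lemma northXs_replicate_false (s : List Bool) : ∀ (k x : ℕ),
    northXs x (List.replicate k false ++ s) = northXs (x + k) s := by
  intro k
  induction k with
  | zero => intro x; simp [northXs]
  | succ m ih =>
    intro x
    rw [List.replicate_succ, List.cons_append]
    show northXs (x + 1) (List.replicate m false ++ s) = _
    rw [ih]
    congr 1
    omega

lemma count_false_buildE (q : ℕ) : ∀ (l : List ℕ) (y : ℕ),
    (buildE q y l).count false = l.length := by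
  intro l
  induction l with
  | nil => intro y; simp [buildE, List.count_replicate]
  | cons e rest ih =>
    intro y
    simp [buildE, List.count_append, List.count_replicate, List.count_cons, ih]

lemma count_true_buildE (q : ℕ) : ∀ (l : List ℕ) (y : ℕ), List.Chain (· ≤ ·) y l →
    (∀ e ∈ l, e ≤ q) → y ≤ q → (buildE q y l).count true = q - y := by
  intro l
  induction l with
  | nil => intro y _ _ _; simp [buildE, List.count_replicate]
  | cons e rest ih =>
    intro y hc hb hy
    rw [List.Chain, List.chain_cons] at hc
    have he : e ≤ q := hb e (by simp)
    have hye : y ≤ e := hc.1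
    simp only [buildE, List.count_append, List.count_replicate, List.count_cons]
    rw [ih e hc.2 (fun x hx => hb x (by simp [hx])) he]
    simp
    omega

lemma eastYs_buildE (q : ℕ) : ∀ (l : List ℕ) (y : ℕ), List.Chain (· ≤ ·) y l →
    eastYs y (buildE q y l) = l := by
  intro l
  induction l with
  | nil =>
    intro y _
    show eastYs y (List.replicate (q - y) true) = _
    have := eastYs_replicate_true [] (q - y) y
    simpa [eastYs] using this
  | cons e rest ih =>
    intro y hc
    rw [List.Chain, List.chain_cons] at hc
    show eastYs y (List.replicate (e - y) true ++ false :: buildE q e rest) = _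
    rw [eastYs_replicate_true]
    have hye : y + (e - y) = e := by omega
    rw [hye]
    show e :: eastYs e (buildE q e rest) = _
    rw [ih e hc.2]

lemma count_true_buildN (p : ℕ) : ∀ (l : List ℕ) (x : ℕ),
    (buildN p x l).count true = l.length := by
  intro l
  induction l with
  | nil => intro x; simp [buildN, List.count_replicate]
  | cons e rest ih =>
    intro x
    simp [buildN, List.count_append, List.count_replicate, List.count_cons, ih]

lemma count_false_buildN (p : ℕ) : ∀ (l : List ℕ) (x : ℕ), List.Chain (· ≤ ·) x l →
    (∀ e ∈ l, e ≤ p) → x ≤ p → (buildN p x l).count false = p - x := by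
  intro l
  induction l with
  | nil => intro x _ _ _; simp [buildN, List.count_replicate]
  | cons e rest ih =>
    intro x hc hb hx
    rw [List.Chain, List.chain_cons] at hc
    have he : e ≤ p := hb e (by simp)
    have hxe : x ≤ e := hc.1
    simp only [buildN, List.count_append, List.count_replicate, List.count_cons]
    rw [ih e hc.2 (fun z hz => hb z (by simp [hz])) he]
    simp
    omega

lemma northXs_buildN (p : ℕ) : ∀ (l : List ℕ) (x : ℕ), List.Chain (· ≤ ·) x l →
    northXs x (buildN p x l) = l := by
  intro l
  induction l with
  | nil =>
    intro x _
    show northXs x (List.replicate (p - x) false) = _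
    have := northXs_replicate_false [] (p - x) x
    simpa [northXs] using this
  | cons e rest ih =>
    intro x hc
    rw [List.Chain, List.chain_cons] at hc
    show northXs x (List.replicate (e - x) false ++ true :: buildN p e rest) = _
    rw [northXs_replicate_false]
    have hxe : x + (e - x) = e := by omega
    rw [hxe]
    show e :: northXs e (buildN p e rest) = _
    rw [ih e hc.2]

lemma chain_ofFn {n : ℕ} (f : Fin n → ℕ) (hf : ∀ i j : Fin n, i ≤ j → f i ≤ f j) :
    List.Chain (· ≤ ·) 0 (List.ofFn f) := by
  rw [List.Chain, List.isChain_iff_getElem]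
  intro i h
  cases i with
  | zero => simp
  | succ k =>
    simp only [List.getElem_cons_succ, List.getElem_ofFn]
    simp only [List.length_cons, List.length_ofFn] at h
    exact hf _ _ (by simp [Fin.le_def])


end PFAux

/-- `(a,b)` is a `(p,q)`-parking function iff
`#{j : a j < i+1} ≥ b_(i)` for `i = 0, …, q-1` and
`#{j : b j < i+1} ≥ a_(i)` for `i = 0, …, p-1`. -/
theorem stmt7 (p q : ℕ) (hp : 1 ≤ p) (hq : 1 ≤ q) (a : Fin p → ℕ) (b : Fin q → ℕ) :
    IsPQParkingFunction a b ↔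
      (∀ i : Fin q, orderStat b i ≤ countLt a ((i : ℕ) + 1)) ∧
        (∀ i : Fin p, orderStat a i ≤ countLt b ((i : ℕ) + 1)) := by
  constructor
  · rintro ⟨sa, sb, hpa, hpb, hea, hnb, hw⟩
    have hβle : ∀ j : Fin q, orderStat b j ≤ p := by
      intro j
      have hmem : orderStat b j ∈ northXs 0 sb := by
        rw [hnb]; exact List.mem_ofFn.mpr ⟨j, rfl⟩
      have h := PFAux.northXs_ub sb 0 _ hmem
      rw [hpb.1] at h
      omega
    have h2 : ∀ i : Fin p, orderStat a i ≤ countLt b ((i : ℕ) + 1) := by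
      intro i
      have hlen : (eastYs 0 sa).length = p := by rw [PFAux.length_eastYs, hpa.1]
      have hi : (i : ℕ) < (eastYs 0 sa).length := by rw [hlen]; exact i.isLt
      have hget : (eastYs 0 sa).get ⟨(i : ℕ), hi⟩ = orderStat a i := by
        simp [hea]
      have hmem := PFAux.eastYs_get_mem sa 0 0 (i : ℕ) hi
      rw [hget] at hmem
      obtain ⟨pt', hpt', hx, hy⟩ := hw _ hmem
      have hub := PFAux.stepPoints_y_le sb 0 0 pt' hpt'
      rw [hnb] at hub
      have hx' : pt'.1 = (i : ℕ) := by simpa using hx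
      rw [hx'] at hub
      rw [PFAux.countP_ofFn_le, PFAux.countLe_orderStat] at hub
      have hy' : orderStat a i ≤ pt'.2 := by simpa using hy
      rw [PFAux.countLt_succ]
      omega
    refine ⟨?_, h2⟩
    intro i
    rw [PFAux.countLt_succ]
    by_cases hm : countLe a (i : ℕ) < p
    · have hnot : ¬ orderStat a ⟨countLe a (i : ℕ), hm⟩ ≤ (i : ℕ) := by
        rw [PFAux.orderStat_le_iff]
        simp
      have h2m := h2 ⟨countLe a (i : ℕ), hm⟩
      rw [PFAux.countLt_succ] at h2m
      rw [PFAux.orderStat_le_iff]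
      simp only at h2m
      omega
    · push_neg at hm
      rw [PFAux.orderStat_le_iff]
      have hqc : countLe b p = q := by
        rw [← PFAux.countLe_orderStat]
        unfold countLe
        rw [Finset.filter_true_of_mem (fun j _ => hβle j)]
        simp
      have hmono : countLe b p ≤ countLe b (countLe a (i : ℕ)) := PFAux.countLe_mono b hm
      have := i.isLt
      omega
  · rintro ⟨h1, h2⟩
    have hαq : ∀ i : Fin p, orderStat a i ≤ q := fun i => le_trans (h2 i) (PFAux.countLt_le b _)
    have hβp : ∀ i : Fin q, orderStat b i ≤ p := fun i => le_trans (h1 i) (PFAux.countLt_le a _)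
    have hca : List.Chain (· ≤ ·) 0 (List.ofFn fun i : Fin p => orderStat a i) :=
      PFAux.chain_ofFn _ (fun i j hij => PFAux.orderStat_mono a hij)
    have hcb : List.Chain (· ≤ ·) 0 (List.ofFn fun j : Fin q => orderStat b j) :=
      PFAux.chain_ofFn _ (fun i j hij => PFAux.orderStat_mono b hij)
    have hba : ∀ e ∈ (List.ofFn fun i : Fin p => orderStat a i), e ≤ q := by
      intro e he
      obtain ⟨i, hi⟩ := List.mem_ofFn.mp he
      exact hi ▸ hαq i
    have hbb : ∀ e ∈ (List.ofFn fun j : Fin q => orderStat b j), e ≤ p := by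
      intro e he
      obtain ⟨j, hj⟩ := List.mem_ofFn.mp he
      exact hj ▸ hβp j
    refine ⟨PFAux.buildE q 0 (List.ofFn fun i : Fin p => orderStat a i),
      PFAux.buildN p 0 (List.ofFn fun j : Fin q => orderStat b j), ⟨?_, ?_⟩, ⟨?_, ?_⟩, ?_, ?_, ?_⟩
    · rw [PFAux.count_false_buildE]; simp
    · rw [PFAux.count_true_buildE q _ 0 hca hba (Nat.zero_le q)]; omega
    · rw [PFAux.count_false_buildN p _ 0 hcb hbb (Nat.zero_le p)]; omega
    · rw [PFAux.count_true_buildN]; simp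
    · exact PFAux.eastYs_buildE q _ 0 hca
    · exact PFAux.northXs_buildN p _ 0 hcb
    · intro pt hpt
      have hcfE : (PFAux.buildE q 0 (List.ofFn fun i : Fin p => orderStat a i)).count false = p := by
        rw [PFAux.count_false_buildE]; simp
      have hctE : (PFAux.buildE q 0 (List.ofFn fun i : Fin p => orderStat a i)).count true = q := by
        rw [PFAux.count_true_buildE q _ 0 hca hba (Nat.zero_le q)]; omega
      have hcfN : (PFAux.buildN p 0 (List.ofFn fun j : Fin q => orderStat b j)).count false = p := by
        rw [PFAux.count_false_buildN p _ 0 hcb hbb (Nat.zero_le p)]; omega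
      have hub := PFAux.stepPoints_ub _ 0 0 pt hpt
      rw [hcfE, hctE] at hub
      refine ⟨(pt.1, 0 + (northXs 0 (PFAux.buildN p 0 (List.ofFn fun j : Fin q => orderStat b j))).countP
          (fun e => e ≤ pt.1)), PFAux.mem_stepPoints_top _ 0 0 pt.1 (Nat.zero_le _) (by rw [hcfN]; omega),
        rfl, ?_⟩
      simp only
      rw [PFAux.northXs_buildN p _ 0 hcb, PFAux.countP_ofFn_le, PFAux.countLe_orderStat]
      rcases Nat.eq_zero_or_pos pt.2 with hv | hv
      · omega
      · have hwq : pt.2 - 1 < q := by omega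
        have hb1 := h1 ⟨pt.2 - 1, hwq⟩
        have hF3 := PFAux.stepPoints_x_ge _ 0 0 pt hpt
        rw [PFAux.eastYs_buildE q _ 0 hca, PFAux.countP_ofFn_lt, PFAux.countLt_orderStat] at hF3
        have hlt : countLt a (pt.2 - 1 + 1) = countLt a pt.2 := by congr 1; omega
        rw [hlt] at hb1
        have hle : orderStat b ⟨pt.2 - 1, hwq⟩ ≤ pt.1 := by omega
        have := (PFAux.orderStat_le_iff b ⟨pt.2 - 1, hwq⟩ pt.1).mp hle
        simp only at this
        omega
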